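/- arXiv:1407.1922 — 6 statements merged into one kernel-verified Lean document; each statement's English description precedes it below -/
import Mathlib

section
/- Let 0 < δ < 1 and 0 < δ_E < 1 and D ≥ 0. The optimal value of the linear program: maximize m subject to ((1-δ_E)/(1-δ·δ_E))·m ≤ k, k/((1-δ)·δ_E) + m/(1-δ) ≤ 1, k ≤ D·δ_E·(1-δ)/(1-δ·δ_E), k ≥ 0, m ≥ 0, equals min( ((1-δ)·δ_E/(1-δ_E))·D , (1-δ)·δ_E·(1-δ·δ_E)/(1-δ·δ_E²) ). -/
/-- Secret message capacity LP of the broadcast erasure channel with feedback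
and limited source randomness `D`. -/
theorem secret_message_capacity_LP (δ δE D : ℝ)
    (hδ0 : 0 < δ) (hδ1 : δ < 1) (hδE0 : 0 < δE) (hδE1 : δE < 1) (hD : 0 ≤ D) :
    IsGreatest {m : ℝ | ∃ k : ℝ,
        (1 - δE) / (1 - δ * δE) * m ≤ k ∧
        k / ((1 - δ) * δE) + m / (1 - δ) ≤ 1 ∧
        k ≤ D * δE * (1 - δ) / (1 - δ * δE) ∧
        0 ≤ k ∧ 0 ≤ m}
      (min ((1 - δ) * δE / (1 - δE) * D)
        ((1 - δ) * δE * (1 - δ * δE) / (1 - δ * δE ^ 2))) := by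
  have h1 : (0:ℝ) < 1 - δ := by linarith
  have h2 : (0:ℝ) < 1 - δE := by linarith
  have h3 : (0:ℝ) < 1 - δ * δE := by nlinarith
  have h4 : (0:ℝ) < 1 - δ * δE ^ 2 := by nlinarith
  set m1 := (1 - δ) * δE / (1 - δE) * D with hm1def
  set m2 := (1 - δ) * δE * (1 - δ * δE) / (1 - δ * δE ^ 2) with hm2def
  have hm1 : 0 ≤ m1 := by positivity
  have hm2 : 0 ≤ m2 := by positivity
  set M := min m1 m2 with hMdef
  have hM0 : 0 ≤ M := le_min hm1 hm2
  have hMm1 : M ≤ m1 := min_le_left _ _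
  have hMm2 : M ≤ m2 := min_le_right _ _
  -- key polynomial forms
  have hMm1' : M * (1 - δE) ≤ (1 - δ) * δE * D := by
    have := mul_le_mul_of_nonneg_right hMm1 h2.le
    rw [hm1def] at this
    calc M * (1 - δE) ≤ (1 - δ) * δE / (1 - δE) * D * (1 - δE) := this
      _ = (1 - δ) * δE * D := by field_simp
  have hMm2' : M * (1 - δ * δE ^ 2) ≤ (1 - δ) * δE * (1 - δ * δE) := by
    have := mul_le_mul_of_nonneg_right hMm2 h4.le
    rw [hm2def] at this
    calc M * (1 - δ * δE ^ 2) ≤ (1 - δ) * δE * (1 - δ * δE) / (1 - δ * δE ^ 2) * (1 - δ * δE ^ 2) := this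
      _ = (1 - δ) * δE * (1 - δ * δE) := by field_simp
  constructor
  · refine ⟨(1 - δE) / (1 - δ * δE) * M, le_refl _, ?_, ?_, by positivity, hM0⟩
    · have heq : (1 - δE) / (1 - δ * δE) * M / ((1 - δ) * δE) + M / (1 - δ)
          = M * (1 - δ * δE ^ 2) / ((1 - δ) * δE * (1 - δ * δE)) := by
        rw [div_mul_eq_mul_div, div_div, div_add_div _ _ (by positivity) h1.ne', div_eq_div_iff (by positivity) (by positivity)]
        ring
      rw [heq, div_le_one (by positivity)]
      nlinarith [hMm2']
    · rw [div_mul_eq_mul_div, div_le_div_iff₀ h3 h3]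
      nlinarith [hMm1']
  · rintro m ⟨k, hak, hsum, hK, hk0, hm0⟩
    have ham : (1 - δE) * m / (1 - δ * δE) ≤ k := by
      rw [div_mul_eq_mul_div] at hak; exact hak
    apply le_min
    · -- m ≤ m1
      rw [hm1def, div_mul_eq_mul_div, le_div_iff₀ h2]
      have : (1 - δE) * m / (1 - δ * δE) ≤ D * δE * (1 - δ) / (1 - δ * δE) :=
        le_trans ham hK
      rw [div_le_div_iff₀ h3 h3] at this
      nlinarith [this]
    · -- m ≤ m2
      rw [hm2def, le_div_iff₀ h4]
      have h5 : (1 - δE) * m / (1 - δ * δE) / ((1 - δ) * δE) + m / (1 - δ) ≤ 1 := by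
        refine le_trans (by gcongr) hsum
      rw [div_div, div_add_div _ _ (by positivity) h1.ne', div_le_one (by positivity)] at h5
      nlinarith [h5]
end

section
/- Let 0 < δ < 1 and 0 < δ_E < 1. Then for every D ≥ 0, the ARQ secret key rate R_ARQ(D) = min(D·(1-δ)·δ_E/(1-δ·δ_E), (1-δ)²·δ_E/(1-δ·δ_E)) is at most the MDS-exp secret key rate R_MDS(D) = min(D·δ_E·(1-δ)/(1-δ·δ_E), (1-δ)·δ_E), with equality if and only if D ≤ 1-δ. -/
/-- The ARQ secret key rate is at most the MDS-exp secret key rate, with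
equality iff `D ≤ 1 - δ`. -/
theorem ARQ_le_MDS_key_rate (δ δE : ℝ)
    (hδ0 : 0 < δ) (hδ1 : δ < 1) (hδE0 : 0 < δE) (hδE1 : δE < 1) :
    ∀ D : ℝ, 0 ≤ D →
      min (D * (1 - δ) * δE / (1 - δ * δE)) ((1 - δ) ^ 2 * δE / (1 - δ * δE)) ≤
        min (D * δE * (1 - δ) / (1 - δ * δE)) ((1 - δ) * δE) ∧
      (min (D * (1 - δ) * δE / (1 - δ * δE)) ((1 - δ) ^ 2 * δE / (1 - δ * δE)) =
        min (D * δE * (1 - δ) / (1 - δ * δE)) ((1 - δ) * δE) ↔ D ≤ 1 - δ) := by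
  intro D hD
  have hden : 0 < 1 - δ * δE := by nlinarith
  have h1δ : 0 < 1 - δ := by linarith
  have hcomm : D * (1 - δ) * δE / (1 - δ * δE) = D * δE * (1 - δ) / (1 - δ * δE) := by
    ring_nf
  have hδE1' : 0 < 1 - δE := by linarith
  have hc : 0 < (1 - δ) * δE * (1 - δ * δE) := mul_pos (mul_pos h1δ hδE0) hden
  have hkey : (1 - δ) ^ 2 * δE / (1 - δ * δE) < (1 - δ) * δE := by
    rw [div_lt_iff₀ hden]
    nlinarith [mul_pos (mul_pos h1δ hδE0) (mul_pos hδ0 hδE1')]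
  refine ⟨?_, ?_, ?_⟩
  · rw [hcomm]; exact min_le_min le_rfl hkey.le
  · intro h
    by_contra hlt
    push_neg at hlt
    have hlhs : min (D * (1 - δ) * δE / (1 - δ * δE)) ((1 - δ) ^ 2 * δE / (1 - δ * δE))
        = (1 - δ) ^ 2 * δE / (1 - δ * δE) := by
      apply min_eq_right
      rw [div_le_div_iff₀ hden hden]
      nlinarith [mul_nonneg (show (0:ℝ) ≤ D - (1 - δ) by linarith) hc.le]
    have h2 : (1 - δ) ^ 2 * δE / (1 - δ * δE) < D * δE * (1 - δ) / (1 - δ * δE) := by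
      rw [div_lt_div_iff₀ hden hden]
      nlinarith [mul_pos (show (0:ℝ) < D - (1 - δ) by linarith) hc]
    have := lt_min h2 hkey
    rw [← h, hlhs] at this
    exact lt_irrefl _ this
  · intro h
    have hl : min (D * (1 - δ) * δE / (1 - δ * δE)) ((1 - δ) ^ 2 * δE / (1 - δ * δE))
        = D * (1 - δ) * δE / (1 - δ * δE) := by
      apply min_eq_left
      rw [div_le_div_iff₀ hden hden]
      nlinarith [mul_nonneg (show (0:ℝ) ≤ (1 - δ) - D by linarith) hc.le]
    have hr : min (D * δE * (1 - δ) / (1 - δ * δE)) ((1 - δ) * δE)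
        = D * δE * (1 - δ) / (1 - δ * δE) := by
      apply min_eq_left
      rw [div_le_iff₀ hden]
      nlinarith [mul_nonneg (show (0:ℝ) ≤ (1 - δ * δE) - D by nlinarith) (mul_pos hδE0 h1δ).le]
    rw [hl, hr, hcomm]
end

section
/- Let N ≥ 1 and for each j ∈ {1,...,N} let 0 < δ_j < 1 and 0 < δ_{jE} < 1, and suppose each node has unlimited private randomness (so only the constraints ((1-δ_{jE})/(1-δ_j·δ_{jE}))·m ≤ k_j and k_j/((1-δ_j)·δ_{jE}) + m/(1-δ_j) ≤ 1 with k_j, m ≥ 0 remain). Then the optimal value of the resulting LP (maximize m) equals min over j of (1-δ_j)·δ_{jE}·(1-δ_j·δ_{jE})/(1-δ_j·δ_{jE}²), i.e., the minimum of the per-hop secret message capacities. -/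
private lemma hop_upper (a b m k : ℝ) (ha : 0 < a) (ha1 : a < 1) (hb : 0 < b) (hb1 : b < 1)
    (h1 : (1 - b) / (1 - a * b) * m ≤ k)
    (h2 : k / ((1 - a) * b) + m / (1 - a) ≤ 1) :
    m ≤ (1 - a) * b * (1 - a * b) / (1 - a * b ^ 2) := by
  have ha' : (0:ℝ) < 1 - a := by linarith
  have hd1 : 0 < 1 - a * b := by nlinarith
  have hd2 : 0 < 1 - a * b ^ 2 := by nlinarith
  have hd3 : 0 < (1 - a) * b := mul_pos ha' hb
  have hD : 0 < (1 - a) * b * (1 - a) := mul_pos hd3 ha'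
  rw [le_div_iff₀ hd2]
  rw [div_add_div _ _ (ne_of_gt hd3) (ne_of_gt ha'), div_le_one hD] at h2
  rw [div_mul_eq_mul_div, div_le_iff₀ hd1] at h1
  nlinarith [mul_pos hd3 hd1, mul_le_mul_of_nonneg_left h1 hd3.le]

private lemma hop_feas (a b m : ℝ) (ha : 0 < a) (ha1 : a < 1) (hb : 0 < b) (hb1 : b < 1)
    (hm : 0 ≤ m) (hmc : m ≤ (1 - a) * b * (1 - a * b) / (1 - a * b ^ 2)) :
    (1 - b) / (1 - a * b) * m ≤ (1 - b) / (1 - a * b) * m ∧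
    ((1 - b) / (1 - a * b) * m) / ((1 - a) * b) + m / (1 - a) ≤ 1 ∧
    0 ≤ (1 - b) / (1 - a * b) * m := by
  have ha' : (0:ℝ) < 1 - a := by linarith
  have hb' : (0:ℝ) < 1 - b := by linarith
  have hd1 : 0 < 1 - a * b := by nlinarith
  have hd2 : 0 < 1 - a * b ^ 2 := by nlinarith
  have hd3 : 0 < (1 - a) * b := mul_pos ha' hb
  have hD : 0 < (1 - a) * b * (1 - a) := mul_pos hd3 ha'
  refine ⟨le_refl _, ?_, by positivity⟩
  rw [le_div_iff₀ hd2] at hmc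
  rw [div_add_div _ _ (ne_of_gt hd3) (ne_of_gt ha'), div_le_one hD]
  have h4 : (1 - b) / (1 - a * b) * m * (1 - a) = (1 - b) * m * (1 - a) / (1 - a * b) := by
    ring
  rw [h4, div_add' _ _ _ (ne_of_gt hd1), div_le_iff₀ hd1]
  nlinarith

/-- One-Eve line network with unlimited private randomness at every node: the LP
optimum equals the minimum of the per-hop secret message capacities. -/
theorem oneEve_unlimited_randomness_LP (N : ℕ) (hN : 1 ≤ N) (δ δE : ℕ → ℝ)
    (hδ : ∀ j ∈ Finset.Icc 1 N, 0 < δ j ∧ δ j < 1)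
    (hδE : ∀ j ∈ Finset.Icc 1 N, 0 < δE j ∧ δE j < 1) :
    IsGreatest {m : ℝ | ∃ k : ℕ → ℝ, 0 ≤ m ∧ ∀ j ∈ Finset.Icc 1 N,
        (1 - δE j) / (1 - δ j * δE j) * m ≤ k j ∧
        k j / ((1 - δ j) * δE j) + m / (1 - δ j) ≤ 1 ∧
        0 ≤ k j}
      ((Finset.Icc 1 N).inf' (Finset.nonempty_Icc.mpr hN)
        (fun j => (1 - δ j) * δE j * (1 - δ j * δE j) / (1 - δ j * δE j ^ 2))) := by
  set M := (Finset.Icc 1 N).inf' (Finset.nonempty_Icc.mpr hN)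
        (fun j => (1 - δ j) * δE j * (1 - δ j * δE j) / (1 - δ j * δE j ^ 2)) with hM
  have hMpos : 0 ≤ M := by
    rw [hM]
    apply le_of_lt
    rw [Finset.lt_inf'_iff]
    intro j hj
    obtain ⟨ha, ha1⟩ := hδ j hj
    obtain ⟨hb, hb1⟩ := hδE j hj
    have hd2 : 0 < 1 - δ j * δE j ^ 2 := by nlinarith
    have hnum : 0 < (1 - δ j) * δE j * (1 - δ j * δE j) :=
      mul_pos (mul_pos (by linarith) hb) (by nlinarith)
    exact div_pos hnum hd2
  constructor
  · refine ⟨fun j => (1 - δE j) / (1 - δ j * δE j) * M, hMpos, fun j hj => ?_⟩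
    obtain ⟨ha, ha1⟩ := hδ j hj
    obtain ⟨hb, hb1⟩ := hδE j hj
    exact hop_feas (δ j) (δE j) M ha ha1 hb hb1 hMpos
      (Finset.inf'_le (fun j => (1 - δ j) * δE j * (1 - δ j * δE j) / (1 - δ j * δE j ^ 2)) hj)
  · rintro m ⟨k, hm, hk⟩
    rw [hM, Finset.le_inf'_iff]
    intro j hj
    obtain ⟨ha, ha1⟩ := hδ j hj
    obtain ⟨hb, hb1⟩ := hδE j hj
    obtain ⟨h1, h2, _⟩ := hk j hj
    exact hop_upper (δ j) (δE j) m (k j) ha ha1 hb hb1 h1 h2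
end

section
/- Let N = 1 with δ, δ_E ∈ (0,1) and unlimited source randomness D = +∞ (i.e., drop the randomness constraint). Then the All-Eves LP for N = 1 — maximize m subject to ((1-δ_E)/(1-δ·δ_E))·m ≤ k - d, k/((1-δ)·δ_E) + m/(1-δ) ≤ 1, k, m, d ≥ 0 — has optimal value (1-δ)·δ_E·(1-δ·δ_E)/(1-δ·δ_E²), attained at d = 0. -/
/-- The one-hop All-Eves LP with unlimited source randomness has optimal value
`(1-δ)·δE·(1-δ·δE)/(1-δ·δE²)`, attained at `d = 0`. -/
theorem allEves_one_hop_LP (δ δE : ℝ)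
    (hδ0 : 0 < δ) (hδ1 : δ < 1) (hδE0 : 0 < δE) (hδE1 : δE < 1) :
    IsGreatest {m : ℝ | ∃ k d : ℝ,
        (1 - δE) / (1 - δ * δE) * m ≤ k - d ∧
        k / ((1 - δ) * δE) + m / (1 - δ) ≤ 1 ∧
        0 ≤ k ∧ 0 ≤ m ∧ 0 ≤ d}
      ((1 - δ) * δE * (1 - δ * δE) / (1 - δ * δE ^ 2)) ∧
    ∃ k : ℝ,
      (1 - δE) / (1 - δ * δE) * ((1 - δ) * δE * (1 - δ * δE) / (1 - δ * δE ^ 2))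
          ≤ k - 0 ∧
      k / ((1 - δ) * δE) +
          (1 - δ) * δE * (1 - δ * δE) / (1 - δ * δE ^ 2) / (1 - δ) ≤ 1 ∧
      0 ≤ k := by
  have h1 : 0 < 1 - δ := by linarith
  have h4 : 0 < 1 - δE := by linarith
  have h2 : 0 < 1 - δ * δE := by nlinarith
  have h3 : 0 < 1 - δ * δE ^ 2 := by nlinarith
  set M : ℝ := (1 - δ) * δE * (1 - δ * δE) / (1 - δ * δE ^ 2) with hM
  have hMpos : 0 < M := by positivity
  set K : ℝ := (1 - δE) / (1 - δ * δE) * M with hK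
  have hKpos : 0 < K := by positivity
  have hw1 : (1 - δE) / (1 - δ * δE) * M ≤ K - 0 := by rw [sub_zero]
  have hw2 : K / ((1 - δ) * δE) + M / (1 - δ) ≤ 1 := by
    have : K / ((1 - δ) * δE) + M / (1 - δ) = 1 := by
      rw [hK, hM]
      field_simp [h1.ne', h2.ne', h3.ne', hδE0.ne', (by linarith : (0:ℝ) < 1 - δE * δ).ne', (by linarith : (0:ℝ) < 1 - δE ^ 2 * δ).ne']
      ring
    exact this.le
  refine ⟨⟨⟨K, 0, hw1, hw2, hKpos.le, hMpos.le, le_refl 0⟩, ?_⟩, K, hw1, hw2, hKpos.le⟩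
  rintro m ⟨k, d, hc1, hc2, hk, hm, hd⟩
  have hc1' : (1 - δE) * m ≤ k * (1 - δ * δE) := by
    rw [div_mul_eq_mul_div, div_le_iff₀ h2] at hc1
    nlinarith
  have hc2' : k + m * δE ≤ (1 - δ) * δE := by
    rw [div_add_div _ _ (by positivity) (ne_of_gt h1), div_le_one (by positivity)] at hc2
    nlinarith
  rw [hM, le_div_iff₀ h3]
  nlinarith [mul_le_mul_of_nonneg_right hc2' h2.le]
end

section
/- Let X, Y, Z, S, U, W be random variables (over finite alphabets) with joint distribution factorizing so that for each i, S_i is independent of (U, W, Y^{i-1}, Z^{i-1}, S^{i-1}, X_i), where X_i is a deterministic function of (W, U, S^{i-1}), and given S_i the pair (Y_i, Z_i) is determined: Y_i = X_i if S_i indicates reception (probability 1-δ) and Y_i = erasure otherwise, Z_i = X_i with probability 1-δ_E independently. Then H(U) ≥ (1-δ·δ_E)·Σ_{i=1}^n H(X_i | Y^{i-1} Z^{i-1} S^{i-1} W). -/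
open Finset

set_option synthInstance.maxSize 2000
set_option synthInstance.maxHeartbeats 2000000
set_option maxHeartbeats 2000000
set_option linter.unusedSectionVars false
set_option linter.unusedVariables false

/-- Shannon entropy (in nats) of a random variable `f` on a finite probability
space with pmf `p`. -/
noncomputable def ent {Ω α : Type} [Fintype Ω] [Fintype α] [DecidableEq α]
    (p : Ω → ℝ) (f : Ω → α) : ℝ :=
  ∑ a : α, Real.negMulLog (∑ ω ∈ Finset.univ.filter (fun ω => f ω = a), p ω)

/-- Conditional entropy `H(f | g) = H(f, g) - H(g)`. -/
noncomputable def condEnt {Ω α β : Type} [Fintype Ω] [Fintype α] [Fintype β]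
    [DecidableEq α] [DecidableEq β] (p : Ω → ℝ) (f : Ω → α) (g : Ω → β) : ℝ :=
  ent p (fun ω => (f ω, g ω)) - ent p g

/-- The prefix `(f 1, …, f (i-1))` of a process, encoded as a function defined
on all of `Fin n` which is `none` from time `i` on. -/
def histPrefix {n : ℕ} {Ω β : Type} (f : Fin n → Ω → β) (i : Fin n) (ω : Ω) :
    Fin n → Option β :=
  fun j => if j < i then some (f j ω) else none

namespace RB


variable {Ω α β γ : Type} [Fintype Ω] [Fintype α] [Fintype β] [Fintype γ]
  [DecidableEq α] [DecidableEq β] [DecidableEq γ]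
variable {p : Ω → ℝ}

noncomputable def massOf (p : Ω → ℝ) (f : Ω → α) (a : α) : ℝ :=
  ∑ ω ∈ Finset.univ.filter (fun ω => f ω = a), p ω

lemma ent_def (p : Ω → ℝ) (f : Ω → α) :
    ent p f = ∑ a, Real.negMulLog (massOf p f a) := rfl

lemma massOf_nonneg (hp : ∀ ω, 0 ≤ p ω) (f : Ω → α) (a : α) : 0 ≤ massOf p f a :=
  Finset.sum_nonneg fun ω _ => hp ω

lemma sum_massOf (p : Ω → ℝ) (f : Ω → α) : ∑ a, massOf p f a = ∑ ω, p ω :=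
  Finset.sum_fiberwise _ _ _

lemma massOf_le_one (hp : ∀ ω, 0 ≤ p ω) (hp1 : ∑ ω, p ω = 1) (f : Ω → α) (a : α) :
    massOf p f a ≤ 1 := by
  rw [← hp1]
  exact Finset.sum_le_sum_of_subset_of_nonneg (Finset.filter_subset _ _)
    (fun ω _ _ => hp ω)

lemma massOf_comp (p : Ω → ℝ) (f : Ω → α) (φ : α → β) (b : β) :
    massOf p (fun ω => φ (f ω)) b
      = ∑ a ∈ Finset.univ.filter (fun a => φ a = b), massOf p f a := by
  unfold massOf
  rw [Finset.sum_filter, Finset.sum_filter,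
    ← Finset.sum_fiberwise Finset.univ f (fun ω => if φ (f ω) = b then p ω else 0)]
  refine Finset.sum_congr rfl fun a _ => ?_
  have : ∀ ω ∈ Finset.univ.filter (fun ω => f ω = a),
      (if φ (f ω) = b then p ω else 0) = (if φ a = b then p ω else 0) := by
    intro ω hω
    rw [(Finset.mem_filter.mp hω).2]
  rw [Finset.sum_congr rfl this]
  split_ifs <;> simp

lemma negMulLog_add_le {x y : ℝ} (hx : 0 ≤ x) (hy : 0 ≤ y) :
    Real.negMulLog (x + y) ≤ Real.negMulLog x + Real.negMulLog y := by
  rcases eq_or_lt_of_le hx with h | hx'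
  · simp [← h]
  rcases eq_or_lt_of_le hy with h | hy'
  · simp [← h]
  have hxy : 0 < x + y := by linarith
  have h1 : x * Real.log x ≤ x * Real.log (x + y) :=
    mul_le_mul_of_nonneg_left (Real.log_le_log hx' (by linarith)) hx
  have h2 : y * Real.log y ≤ y * Real.log (x + y) :=
    mul_le_mul_of_nonneg_left (Real.log_le_log hy' (by linarith)) hy
  simp only [Real.negMulLog, neg_mul]
  nlinarith
 
lemma negMulLog_sum_le {ι : Type} (s : Finset ι) (m : ι → ℝ) (hm : ∀ i ∈ s, 0 ≤ m i) :
    Real.negMulLog (∑ i ∈ s, m i) ≤ ∑ i ∈ s, Real.negMulLog (m i) := by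
  classical
  induction s using Finset.induction_on with
  | empty => simp
  | @insert a s hnot ih =>
    rw [Finset.sum_insert hnot, Finset.sum_insert hnot]
    have h1 : 0 ≤ m a := hm a (Finset.mem_insert_self a s)
    have h2 : 0 ≤ ∑ i ∈ s, m i :=
      Finset.sum_nonneg fun i hi => hm i (Finset.mem_insert_of_mem hi)
    calc Real.negMulLog (m a + ∑ i ∈ s, m i)
        ≤ Real.negMulLog (m a) + Real.negMulLog (∑ i ∈ s, m i) :=
          negMulLog_add_le h1 h2
      _ ≤ Real.negMulLog (m a) + ∑ i ∈ s, Real.negMulLog (m i) := by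
          have := ih (fun i hi => hm i (Finset.mem_insert_of_mem hi))
          linarith

lemma ent_comp_le (hp : ∀ ω, 0 ≤ p ω) (f : Ω → α) (φ : α → β) :
    ent p (fun ω => φ (f ω)) ≤ ent p f := by
  rw [ent_def, ent_def]
  calc ∑ b, Real.negMulLog (massOf p (fun ω => φ (f ω)) b)
      ≤ ∑ b, ∑ a ∈ Finset.univ.filter (fun a => φ a = b),
          Real.negMulLog (massOf p f a) := by
        refine Finset.sum_le_sum fun b _ => ?_
        rw [massOf_comp]
        exact negMulLog_sum_le _ _ (fun a _ => massOf_nonneg hp f a)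
    _ = ∑ a, Real.negMulLog (massOf p f a) := Finset.sum_fiberwise _ _ _

lemma ent_congr {f g : Ω → α} (h : ∀ ω, f ω = g ω) : ent p f = ent p g := by
  congr 1; funext ω; exact h ω

lemma ent_eq_of_maps (hp : ∀ ω, 0 ≤ p ω) (f : Ω → α) (g : Ω → β)
    (φ : α → β) (ψ : β → α)
    (h1 : ∀ ω, g ω = φ (f ω)) (h2 : ∀ ω, f ω = ψ (g ω)) : ent p g = ent p f := by
  have e1 : ent p g = ent p (fun ω => φ (f ω)) := ent_congr h1
  have e2 : ent p f = ent p (fun ω => ψ (g ω)) := ent_congr h2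
  refine le_antisymm ?_ ?_
  · rw [e1]; exact ent_comp_le hp f φ
  · rw [e2]; exact ent_comp_le hp g ψ

lemma ent_nonneg (hp : ∀ ω, 0 ≤ p ω) (hp1 : ∑ ω, p ω = 1) (f : Ω → α) :
    0 ≤ ent p f := by
  rw [ent_def]
  exact Finset.sum_nonneg fun a _ =>
    Real.negMulLog_nonneg (massOf_nonneg hp f a) (massOf_le_one hp hp1 f a)


-- mass of a pair marginalizes
lemma massOf_pair_fst (p : Ω → ℝ) (f : Ω → α) (g : Ω → β) (a : α) :
    massOf p f a = ∑ b, massOf p (fun ω => (f ω, g ω)) (a, b) := by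
  unfold massOf
  rw [← Finset.sum_fiberwise (Finset.univ.filter (fun ω => f ω = a)) g p]
  refine Finset.sum_congr rfl fun b _ => ?_
  rw [Finset.filter_filter]
  apply Finset.sum_congr _ (fun _ _ => rfl)
  apply Finset.filter_congr
  intro ω _
  simp [Prod.ext_iff]

lemma massOf_pair_snd (p : Ω → ℝ) (f : Ω → α) (g : Ω → β) (b : β) :
    massOf p g b = ∑ a, massOf p (fun ω => (f ω, g ω)) (a, b) := by
  unfold massOf
  rw [← Finset.sum_fiberwise (Finset.univ.filter (fun ω => g ω = b)) f p]
  refine Finset.sum_congr rfl fun a _ => ?_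
  rw [Finset.filter_filter]
  apply Finset.sum_congr _ (fun _ _ => rfl)
  apply Finset.filter_congr
  intro ω _
  simp [Prod.ext_iff, and_comm]

-- Gibbs inequality / subadditivity core
lemma gibbs (P : α × β → ℝ) (hP : ∀ x, 0 ≤ P x) (hP1 : ∑ x, P x = 1) :
    ∑ x : α × β, Real.negMulLog (P x)
      ≤ ∑ a, Real.negMulLog (∑ b, P (a, b)) + ∑ b, Real.negMulLog (∑ a, P (a, b)) := by
  set P1 : α → ℝ := fun a => ∑ b, P (a, b) with hP1def
  set P2 : β → ℝ := fun b => ∑ a, P (a, b) with hP2def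
  have hP1nn : ∀ a, 0 ≤ P1 a := fun a => Finset.sum_nonneg fun b _ => hP (a, b)
  have hP2nn : ∀ b, 0 ≤ P2 b := fun b => Finset.sum_nonneg fun a _ => hP (a, b)
  have hsum1 : ∑ a, P1 a = 1 := by rw [hP1def, ← Fintype.sum_prod_type, hP1]
  have hsum2 : ∑ b, P2 b = 1 := by
    rw [hP2def, Finset.sum_comm, ← Fintype.sum_prod_type, hP1]
  have key : ∀ x : α × β, Real.negMulLog (P x)
      ≤ P x * (-(Real.log (P1 x.1)) - Real.log (P2 x.2)) + (P1 x.1 * P2 x.2 - P x) := by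
    rintro ⟨a, b⟩
    rcases eq_or_lt_of_le (hP (a, b)) with h | h
    · simp only [← h, Real.negMulLog_zero, zero_mul, sub_zero, zero_add]
      exact mul_nonneg (hP1nn a) (hP2nn b)
    · have h1 : 0 < P1 a := lt_of_lt_of_le h
        (Finset.single_le_sum (fun b' _ => hP (a, b')) (Finset.mem_univ b))
      have h2 : 0 < P2 b := lt_of_lt_of_le h
        (Finset.single_le_sum (fun a' _ => hP (a', b)) (Finset.mem_univ a))
      have hlog : Real.log (P1 a * P2 b / P (a, b)) ≤ P1 a * P2 b / P (a, b) - 1 :=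
        Real.log_le_sub_one_of_pos (by positivity)
      rw [Real.log_div (by positivity) (ne_of_gt h), Real.log_mul (ne_of_gt h1) (ne_of_gt h2)] at hlog
      have := mul_le_mul_of_nonneg_left hlog (le_of_lt h)
      have heq : P (a, b) * (P1 a * P2 b / P (a, b) - 1) = P1 a * P2 b - P (a, b) := by
        field_simp
      rw [heq] at this
      simp only [Real.negMulLog, neg_mul]
      nlinarith
  calc ∑ x : α × β, Real.negMulLog (P x)
      ≤ ∑ x : α × β, (P x * (-(Real.log (P1 x.1)) - Real.log (P2 x.2))
          + (P1 x.1 * P2 x.2 - P x)) := Finset.sum_le_sum fun x _ => key x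
    _ = ∑ x : α × β, (P x * (-(Real.log (P1 x.1))) + P x * (-(Real.log (P2 x.2))))
          + (∑ x : α × β, P1 x.1 * P2 x.2 - ∑ x : α × β, P x) := by
        rw [← Finset.sum_sub_distrib, ← Finset.sum_add_distrib]
        congr 1; funext x; ring
    _ = ∑ x : α × β, (P x * (-(Real.log (P1 x.1))) + P x * (-(Real.log (P2 x.2)))) := by
        have : ∑ x : α × β, P1 x.1 * P2 x.2 = 1 := by
          rw [Fintype.sum_prod_type]
          simp only [← Finset.sum_mul, ← Finset.mul_sum]
          rw [hsum2]
          simpa using hsum1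
        rw [this, hP1]; ring
    _ = ∑ a, Real.negMulLog (P1 a) + ∑ b, Real.negMulLog (P2 b) := by
        rw [Finset.sum_add_distrib]
        congr 1
        · rw [Fintype.sum_prod_type]
          refine Finset.sum_congr rfl fun a _ => ?_
          show ∑ b, P (a, b) * -Real.log (P1 a) = _
          rw [← Finset.sum_mul, show (∑ b, P (a, b)) = P1 a from rfl,
            Real.negMulLog]
          ring
        · rw [Fintype.sum_prod_type, Finset.sum_comm]
          refine Finset.sum_congr rfl fun b _ => ?_
          show ∑ a, P (a, b) * -Real.log (P2 b) = _
          rw [← Finset.sum_mul, show (∑ a, P (a, b)) = P2 b from rfl,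
            Real.negMulLog]
          ring

lemma ent_pair_le (hp : ∀ ω, 0 ≤ p ω) (hp1 : ∑ ω, p ω = 1) (f : Ω → α) (g : Ω → β) :
    ent p (fun ω => (f ω, g ω)) ≤ ent p f + ent p g := by
  rw [ent_def, ent_def, ent_def]
  have := gibbs (massOf p (fun ω => (f ω, g ω)))
    (fun x => massOf_nonneg hp _ x) (by rw [sum_massOf, hp1])
  calc ∑ x : α × β, Real.negMulLog (massOf p (fun ω => (f ω, g ω)) x)
      ≤ ∑ a, Real.negMulLog (∑ b, massOf p (fun ω => (f ω, g ω)) (a, b))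
        + ∑ b, Real.negMulLog (∑ a, massOf p (fun ω => (f ω, g ω)) (a, b)) := this
    _ = ∑ a, Real.negMulLog (massOf p f a) + ∑ b, Real.negMulLog (massOf p g b) := by
        congr 1
        · exact Finset.sum_congr rfl fun a _ => by rw [← massOf_pair_fst]
        · exact Finset.sum_congr rfl fun b _ => by rw [← massOf_pair_snd]

lemma condEnt_nonneg (hp : ∀ ω, 0 ≤ p ω) (f : Ω → α) (g : Ω → β) :
    0 ≤ condEnt p f g := by
  have := ent_comp_le (p := p) hp (fun ω => (f ω, g ω)) Prod.snd
  simpa [condEnt] using this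

lemma condEnt_le_ent (hp : ∀ ω, 0 ≤ p ω) (hp1 : ∑ ω, p ω = 1) (f : Ω → α) (g : Ω → β) :
    condEnt p f g ≤ ent p f := by
  have := ent_pair_le hp hp1 f g
  simp only [condEnt]
  linarith

lemma condEnt_det (hp : ∀ ω, 0 ≤ p ω) (f : Ω → α) (g : Ω → β) (Φ : β → α)
    (h : ∀ ω, f ω = Φ (g ω)) : condEnt p f g = 0 := by
  have : ent p (fun ω => (f ω, g ω)) = ent p g :=
    ent_eq_of_maps hp g (fun ω => (f ω, g ω)) (fun b => (Φ b, b)) Prod.snd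
      (fun ω => by show (f ω, g ω) = _; rw [h ω]) (fun ω => rfl)
  simp [condEnt, this]

lemma condEnt_congr_right (hp : ∀ ω, 0 ≤ p ω) (f : Ω → α) (g1 : Ω → β) (g2 : Ω → γ)
    (φ : β → γ) (ψ : γ → β) (h1 : ∀ ω, g2 ω = φ (g1 ω)) (h2 : ∀ ω, g1 ω = ψ (g2 ω)) :
    condEnt p f g1 = condEnt p f g2 := by
  have e1 : ent p g2 = ent p g1 := ent_eq_of_maps hp g1 g2 φ ψ h1 h2
  have e2 : ent p (fun ω => (f ω, g2 ω)) = ent p (fun ω => (f ω, g1 ω)) :=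
    ent_eq_of_maps hp _ _ (Prod.map id φ) (Prod.map id ψ)
      (fun ω => by simp [Prod.map, h1 ω]) (fun ω => by simp [Prod.map, h2 ω])
  simp [condEnt, e1, e2]

-- mixture lemma: if the joint law of (S', ·) factorizes as q s · (law of G s), then
lemma ent_mix (hp1 : ∑ ω, p ω = 1) (S' : Ω → γ) (V' : Ω → α) (q : γ → ℝ) (G : γ → Ω → α)
    (hfact : ∀ s a, massOf p (fun ω => (S' ω, V' ω)) (s, a) = q s * massOf p (G s) a) :
    ent p (fun ω => (S' ω, V' ω))
      = ∑ s, Real.negMulLog (q s) + ∑ s, q s * ent p (G s) := by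
  rw [ent_def, Fintype.sum_prod_type]
  have : ∀ s : γ, ∑ a, Real.negMulLog (massOf p (fun ω => (S' ω, V' ω)) (s, a))
      = Real.negMulLog (q s) + q s * ent p (G s) := by
    intro s
    have hGs : ∑ a, massOf p (G s) a = 1 := by rw [sum_massOf, hp1]
    calc ∑ a, Real.negMulLog (massOf p (fun ω => (S' ω, V' ω)) (s, a))
        = ∑ a, (massOf p (G s) a * Real.negMulLog (q s)
            + q s * Real.negMulLog (massOf p (G s) a)) := by
          refine Finset.sum_congr rfl fun a _ => ?_
          rw [hfact s a, Real.negMulLog_mul]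
      _ = Real.negMulLog (q s) + q s * ent p (G s) := by
          rw [Finset.sum_add_distrib, ← Finset.sum_mul, hGs, ← Finset.mul_sum, ent_def]
          ring
  rw [Finset.sum_congr rfl (fun s _ => this s), Finset.sum_add_distrib]


lemma sum_filter_congr (p : Ω → ℝ) (P Q : Ω → Prop) [DecidablePred P] [DecidablePred Q]
    (h : ∀ ω, P ω ↔ Q ω) :
    ∑ ω ∈ Finset.univ.filter P, p ω = ∑ ω ∈ Finset.univ.filter Q, p ω := by
  apply Finset.sum_congr _ (fun _ _ => rfl)
  exact Finset.filter_congr (fun ω _ => h ω)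

/-- the erasure map -/
def φer {A : Type} (s : Bool × Bool) (x : A) : Option A × Option A :=
  (if s.1 then some x else none, if s.2 then some x else none)

/-- The single-step identity. -/
lemma step_core {Ω 𝒰 A VT : Type} [Fintype Ω] [Fintype 𝒰] [Fintype A] [Fintype VT]
    [DecidableEq 𝒰] [DecidableEq A] [DecidableEq VT]
    (p : Ω → ℝ) (hp : ∀ ω, 0 ≤ p ω) (hp1 : ∑ ω, p ω = 1)
    (δ δE : ℝ)
    (U' : Ω → 𝒰) (X' : Ω → A) (S' : Ω → Bool × Bool) (V' : Ω → VT)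
    (Y' Z' : Ω → Option A)
    (hY' : ∀ ω, Y' ω = if (S' ω).1 then some (X' ω) else none)
    (hZ' : ∀ ω, Z' ω = if (S' ω).2 then some (X' ω) else none)
    (d : A)
    (Φdet : 𝒰 × VT → A) (hdet : ∀ ω, X' ω = Φdet (U' ω, V' ω))
    (hind : ∀ (κ : Type) [DecidableEq κ], ∀ (ρ : 𝒰 × A × VT → κ) (s : Bool × Bool) (v : κ),
      (∑ ω ∈ Finset.univ.filter (fun ω => (S' ω, ρ (U' ω, X' ω, V' ω)) = (s, v)), p ω)
        = ((if s.1 then 1-δ else δ) * (if s.2 then 1-δE else δE)) *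
          ∑ ω ∈ Finset.univ.filter (fun ω => ρ (U' ω, X' ω, V' ω) = v), p ω) :
    condEnt p U' V' - condEnt p U' (fun ω => ((Y' ω, Z' ω), (S' ω, V' ω)))
      = (1 - δ * δE) * condEnt p X' V' := by
  classical
  set q : Bool × Bool → ℝ :=
    fun s => (if s.1 then 1-δ else δ) * (if s.2 then 1-δE else δE) with hq
  have hqsum : ∑ s : Bool × Bool, q s = 1 := by
    simp [hq, Fintype.sum_prod_type, Fintype.sum_bool]
    ring
  set Hq : ℝ := ∑ s : Bool × Bool, Real.negMulLog (q s) with hHq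
  -- basic factorization facts
  have e2 : ent p (fun ω => (S' ω, V' ω)) = Hq + ent p V' := by
    rw [ent_mix hp1 S' V' q (fun _ => V')
      (fun s a => hind VT (fun t => t.2.2) s a)]
    rw [← Finset.sum_mul, hqsum, one_mul]
  have e3 : ent p (fun ω => (S' ω, (U' ω, V' ω))) = Hq + ent p (fun ω => (U' ω, V' ω)) := by
    rw [ent_mix hp1 S' (fun ω => (U' ω, V' ω)) q (fun _ => fun ω => (U' ω, V' ω))
      (fun s a => hind (𝒰 × VT) (fun t => (t.1, t.2.2)) s a)]
    rw [← Finset.sum_mul, hqsum, one_mul]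
  have e4 : ent p (fun ω => (S' ω, ((Y' ω, Z' ω), V' ω)))
      = Hq + ∑ s : Bool × Bool, q s * ent p (fun ω => (φer s (X' ω), V' ω)) := by
    refine ent_mix hp1 S' (fun ω => ((Y' ω, Z' ω), V' ω)) q
      (fun s => fun ω => (φer s (X' ω), V' ω)) (fun s a => ?_)
    have hiff : ∀ ω, ((S' ω, ((Y' ω, Z' ω), V' ω)) = (s, a))
        ↔ ((S' ω, (φer s (X' ω), V' ω)) = (s, a)) := by
      intro ω
      have key : S' ω = s → (Y' ω, Z' ω) = φer s (X' ω) := by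
        intro hs
        rw [hY', hZ', hs]
        rfl
      constructor
      · intro h
        rw [Prod.mk.injEq] at h ⊢
        exact ⟨h.1, by rw [← key h.1]; exact h.2⟩
      · intro h
        rw [Prod.mk.injEq] at h ⊢
        exact ⟨h.1, by rw [key h.1]; exact h.2⟩
    have : massOf p (fun ω => (S' ω, ((Y' ω, Z' ω), V' ω))) (s, a)
        = massOf p (fun ω => (S' ω, (φer s (X' ω), V' ω))) (s, a) := by
      unfold massOf
      exact sum_filter_congr p _ _ hiff
    rw [this]
    exact hind ((Option A × Option A) × VT) (fun t => (φer s t.2.1, t.2.2)) s a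
  -- reorder: ent (U,(S,V)) = ent (S,(U,V))
  have r1 : ent p (fun ω => (U' ω, (S' ω, V' ω)))
      = Hq + ent p (fun ω => (U' ω, V' ω)) := by
    rw [← e3]
    exact ent_eq_of_maps hp (fun ω => (S' ω, (U' ω, V' ω))) _
      (fun t => (t.2.1, (t.1, t.2.2))) (fun t => (t.2.1, (t.1, t.2.2)))
      (fun ω => rfl) (fun ω => rfl)
  -- ent (U, ((Y,Z),(S,V))) = ent (U,(S,V))  (deterministic (Y,Z))
  have hdet0 : condEnt p (fun ω => (Y' ω, Z' ω)) (fun ω => (U' ω, (S' ω, V' ω))) = 0 := by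
    refine condEnt_det hp _ _ (fun t =>
      (if t.2.1.1 then some (Φdet (t.1, t.2.2)) else none,
       if t.2.1.2 then some (Φdet (t.1, t.2.2)) else none)) (fun ω => ?_)
    show (Y' ω, Z' ω) = _
    rw [hY', hZ', hdet]
  have r2 : ent p (fun ω => ((Y' ω, Z' ω), (U' ω, (S' ω, V' ω))))
      = ent p (fun ω => (U' ω, (S' ω, V' ω))) := by
    have := hdet0
    unfold condEnt at this
    linarith
  have r3 : ent p (fun ω => (U' ω, ((Y' ω, Z' ω), (S' ω, V' ω))))
      = ent p (fun ω => ((Y' ω, Z' ω), (U' ω, (S' ω, V' ω)))) :=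
    ent_eq_of_maps hp _ _
      (fun t => (t.2.1, (t.1, t.2.2))) (fun t => (t.2.1, (t.1, t.2.2)))
      (fun ω => rfl) (fun ω => rfl)
  have r4 : ent p (fun ω => ((Y' ω, Z' ω), (S' ω, V' ω)))
      = ent p (fun ω => (S' ω, ((Y' ω, Z' ω), V' ω))) :=
    (ent_eq_of_maps hp (fun ω => ((Y' ω, Z' ω), (S' ω, V' ω)))
      (fun ω => (S' ω, ((Y' ω, Z' ω), V' ω)))
      (fun t => (t.2.1, (t.1, t.2.2))) (fun t => (t.2.1, (t.1, t.2.2)))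
      (fun ω => rfl) (fun ω => rfl)).symm
  -- per-s entropies
  have hs0 : ent p (fun ω => (φer ((false, false) : Bool × Bool) (X' ω), V' ω))
      = ent p V' := by
    refine ent_eq_of_maps hp V' _ (fun v => (((none : Option A), (none : Option A)), v))
      Prod.snd (fun ω => rfl) (fun ω => rfl)
  have hsx : ∀ s : Bool × Bool, s ≠ (false, false) →
      ent p (fun ω => (φer s (X' ω), V' ω)) = ent p (fun ω => (X' ω, V' ω)) := by
    intro s hs
    refine ent_eq_of_maps hp (fun ω => (X' ω, V' ω)) _
      (fun t => (φer s t.1, t.2))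
      (fun t => ((t.1.1.getD (t.1.2.getD d)), t.2)) (fun ω => rfl) (fun ω => ?_)
    rcases s with ⟨b, e⟩
    cases b <;> cases e <;> simp_all [φer]
  -- put it together
  have expand2 : condEnt p U' (fun ω => ((Y' ω, Z' ω), (S' ω, V' ω)))
      = ent p (fun ω => (U' ω, V' ω))
        - ∑ s : Bool × Bool, q s * ent p (fun ω => (φer s (X' ω), V' ω)) := by
    unfold condEnt
    rw [r3, r2, r1, r4, e4]
    ring
  have sum_split : ∑ s : Bool × Bool, q s * ent p (fun ω => (φer s (X' ω), V' ω))
      = (1 - δ * δE) * ent p (fun ω => (X' ω, V' ω)) + q (false, false) * ent p V' := by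
    rw [Fintype.sum_prod_type, Fintype.sum_bool]
    rw [Fintype.sum_bool, Fintype.sum_bool]
    rw [hs0, hsx (true, true) (by simp), hsx (true, false) (by simp),
      hsx (false, true) (by simp)]
    simp only [hq]
    norm_num
    ring
  have hqff : q (false, false) = δ * δE := by simp [hq]
  rw [expand2, sum_split, hqff]
  unfold condEnt
  ring

/-- history with a `ℕ` cutoff -/
def hist {n : ℕ} {Ω c : Type} (f : Fin n → Ω → c) (k : ℕ) (ω : Ω) : Fin n → Option c :=
  fun j => if (j : ℕ) < k then some (f j ω) else none

lemma histPrefix_eq {n : ℕ} {Ω c : Type} (f : Fin n → Ω → c) (i : Fin n) :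
    histPrefix f i = hist f (i : ℕ) := by
  funext ω j
  simp only [histPrefix, hist, Fin.lt_def]

def extend {n : ℕ} {c : Type} (h : Fin n → Option c) (d : ℕ) (x : c) : Fin n → Option c :=
  fun j => if (j : ℕ) < d then h j else if (j : ℕ) = d then some x else none

def trunc {n : ℕ} {c : Type} (h : Fin n → Option c) (d : ℕ) : Fin n → Option c :=
  fun j => if (j : ℕ) < d then h j else none

lemma hist_succ {n : ℕ} {Ω c : Type} (f : Fin n → Ω → c) (i : Fin n) (ω : Ω) :
    hist f ((i : ℕ) + 1) ω = extend (hist f (i : ℕ) ω) (i : ℕ) (f i ω) := by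
  funext j
  unfold hist extend
  by_cases h1 : (j : ℕ) < (i : ℕ)
  · simp [h1, Nat.lt_succ_of_lt h1]
  · by_cases h2 : (j : ℕ) = (i : ℕ)
    · have hj : j = i := Fin.ext h2
      subst hj
      simp [h1, h2]
    · have h3 : ¬ (j : ℕ) < (i : ℕ) + 1 := by omega
      simp [h1, h2, h3]

lemma hist_trunc {n : ℕ} {Ω c : Type} (f : Fin n → Ω → c) (i : Fin n) (ω : Ω) :
    trunc (hist f ((i : ℕ) + 1) ω) (i : ℕ) = hist f (i : ℕ) ω := by
  funext j
  unfold hist trunc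
  by_cases h1 : (j : ℕ) < (i : ℕ)
  · simp [h1, Nat.lt_succ_of_lt h1]
  · simp [h1]

lemma hist_get {n : ℕ} {Ω c : Type} (f : Fin n → Ω → c) (i : Fin n) (ω : Ω) :
    hist f ((i : ℕ) + 1) ω i = some (f i ω) := by
  simp [hist]

end RB

/-- Lemma 2 of the paper (randomness bound): if the channel inputs `Xᵢ` are
deterministic functions of the message `W`, the private randomness `U` and the
feedback history, the outputs `Yᵢ, Zᵢ` are erasures of `Xᵢ` governed by the
state `Sᵢ = (receiver got it, Eve got it)`, and `Sᵢ` is i.i.d.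
`(Bernoulli(1-δ), Bernoulli(1-δE))`, independent of the past and of
`(W, U, Xᵢ)`, then
`H(U) ≥ (1-δ·δE)·∑ᵢ H(Xᵢ | Y^{i-1} Z^{i-1} S^{i-1} W)`. -/
theorem randomness_bound
    {Ω 𝒲 𝒰 A : Type} [Fintype Ω] [Fintype 𝒲] [Fintype 𝒰] [Fintype A]
    [DecidableEq 𝒲] [DecidableEq 𝒰] [DecidableEq A]
    (n : ℕ) (p : Ω → ℝ) (hp : ∀ ω, 0 ≤ p ω) (hp1 : ∑ ω, p ω = 1)
    (δ δE : ℝ) (hδ0 : 0 < δ) (hδ1 : δ < 1) (hδE0 : 0 < δE) (hδE1 : δE < 1)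
    (W : Ω → 𝒲) (U : Ω → 𝒰) (X : Fin n → Ω → A)
    (S : Fin n → Ω → Bool × Bool) (Y Z : Fin n → Ω → Option A)
    -- the channel outputs are erasures of the input, governed by the state
    (hY : ∀ i ω, Y i ω = if (S i ω).1 then some (X i ω) else none)
    (hZ : ∀ i ω, Z i ω = if (S i ω).2 then some (X i ω) else none)
    -- `Xᵢ` is a deterministic function of `(W, U, S^{i-1})`
    (hX : ∀ i : Fin n, ∃ g : 𝒲 × 𝒰 × (Fin n → Option (Bool × Bool)) → A,
      ∀ ω, X i ω = g (W ω, U ω, histPrefix S i ω))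
    -- `Sᵢ` has the product Bernoulli law and is independent of
    -- `(W, U, Xᵢ, Y^{i-1}, Z^{i-1}, S^{i-1})`
    (hS : ∀ i : Fin n, ∀ b e : Bool,
      ∀ T : 𝒲 × 𝒰 × A × (Fin n → Option (Option A)) × (Fin n → Option (Option A)) ×
          (Fin n → Option (Bool × Bool)) → Bool,
      (∑ ω ∈ Finset.univ.filter (fun ω => S i ω = (b, e) ∧
          T (W ω, U ω, X i ω, histPrefix Y i ω, histPrefix Z i ω,
            histPrefix S i ω) = true), p ω) =
        ((if b then 1 - δ else δ) * (if e then 1 - δE else δE)) *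
          ∑ ω ∈ Finset.univ.filter (fun ω =>
            T (W ω, U ω, X i ω, histPrefix Y i ω, histPrefix Z i ω,
              histPrefix S i ω) = true), p ω) :
    ent p U ≥ (1 - δ * δE) *
      ∑ i : Fin n, condEnt p (X i) (fun ω =>
        (histPrefix Y i ω, histPrefix Z i ω, histPrefix S i ω, W ω)) := by
  classical
  rcases Nat.eq_zero_or_pos n with hn | hn
  · subst hn
    simp only [Finset.univ_eq_empty, Finset.sum_empty, mul_zero, ge_iff_le]
    exact RB.ent_nonneg hp hp1 U
  have hΩ : Nonempty Ω := by
    by_contra h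
    rw [not_nonempty_iff] at h
    rw [Finset.univ_eq_empty, Finset.sum_empty] at hp1
    exact absurd hp1 (by norm_num)
  obtain ⟨ω0⟩ := hΩ
  simp only [RB.histPrefix_eq] at hS hX ⊢
  set E : ℕ → ℝ := fun k =>
    condEnt p U (fun ω => (RB.hist Y k ω, RB.hist Z k ω, RB.hist S k ω, W ω)) with hE
  have hstep : ∀ i : Fin n, E (i : ℕ) - E ((i : ℕ) + 1)
      = (1 - δ * δE) * condEnt p (X i)
          (fun ω => (RB.hist Y (i : ℕ) ω, RB.hist Z (i : ℕ) ω, RB.hist S (i : ℕ) ω, W ω)) := by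
    intro i
    obtain ⟨g, hg⟩ := hX i
    set Vi : Ω → (Fin n → Option (Option A)) × (Fin n → Option (Option A)) ×
        (Fin n → Option (Bool × Bool)) × 𝒲 :=
      fun ω => (RB.hist Y (i : ℕ) ω, RB.hist Z (i : ℕ) ω, RB.hist S (i : ℕ) ω, W ω) with hVi
    have h2 : E ((i : ℕ) + 1)
        = condEnt p U (fun ω => ((Y i ω, Z i ω), (S i ω, Vi ω))) := by
      simp only [hE]
      refine RB.condEnt_congr_right hp U _ _
        (fun t => (((t.1 i).getD none, (t.2.1 i).getD none),
          ((t.2.2.1 i).getD (false, false),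
            (RB.trunc t.1 (i : ℕ), RB.trunc t.2.1 (i : ℕ), RB.trunc t.2.2.1 (i : ℕ), t.2.2.2))))
        (fun t => (RB.extend t.2.2.1 (i : ℕ) t.1.1, RB.extend t.2.2.2.1 (i : ℕ) t.1.2,
          RB.extend t.2.2.2.2.1 (i : ℕ) t.2.1, t.2.2.2.2.2))
        ?_ ?_
      · intro ω
        show ((Y i ω, Z i ω), (S i ω, Vi ω)) = _
        rw [hVi]
        simp only [RB.hist_get, RB.hist_trunc, Option.getD_some]
      · intro ω
        show (RB.hist Y ((i : ℕ) + 1) ω, RB.hist Z ((i : ℕ) + 1) ω,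
          RB.hist S ((i : ℕ) + 1) ω, W ω) = _
        simp only [RB.hist_succ, hVi]
    have hdet : ∀ ω, X i ω = (fun t : 𝒰 × ((Fin n → Option (Option A)) ×
        (Fin n → Option (Option A)) × (Fin n → Option (Bool × Bool)) × 𝒲) =>
          g (t.2.2.2.2, t.1, t.2.2.2.1)) (U ω, Vi ω) := by
      intro ω
      exact hg ω
    have hind : ∀ (κ : Type) [DecidableEq κ],
        ∀ (ρ : 𝒰 × A × ((Fin n → Option (Option A)) × (Fin n → Option (Option A)) ×
            (Fin n → Option (Bool × Bool)) × 𝒲) → κ) (s : Bool × Bool) (v : κ),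
        (∑ ω ∈ Finset.univ.filter (fun ω => (S i ω, ρ (U ω, X i ω, Vi ω)) = (s, v)), p ω)
          = ((if s.1 then 1-δ else δ) * (if s.2 then 1-δE else δE)) *
            ∑ ω ∈ Finset.univ.filter (fun ω => ρ (U ω, X i ω, Vi ω) = v), p ω := by
      intro κ _ ρ s v
      have hT := hS i s.1 s.2 (fun t6 => decide
        (ρ (t6.2.1, t6.2.2.1, (t6.2.2.2.1, t6.2.2.2.2.1, t6.2.2.2.2.2, t6.1)) = v))
      calc (∑ ω ∈ Finset.univ.filter (fun ω => (S i ω, ρ (U ω, X i ω, Vi ω)) = (s, v)), p ω)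
          = ∑ ω ∈ Finset.univ.filter (fun ω => S i ω = (s.1, s.2) ∧
              decide (ρ (U ω, X i ω, Vi ω) = v) = true), p ω := by
            refine RB.sum_filter_congr p _ _ (fun ω => ?_)
            simp [Prod.ext_iff]
        _ = ((if s.1 then 1-δ else δ) * (if s.2 then 1-δE else δE)) *
            ∑ ω ∈ Finset.univ.filter (fun ω =>
              decide (ρ (U ω, X i ω, Vi ω) = v) = true), p ω := hT
        _ = ((if s.1 then 1-δ else δ) * (if s.2 then 1-δE else δE)) *
            ∑ ω ∈ Finset.univ.filter (fun ω => ρ (U ω, X i ω, Vi ω) = v), p ω := by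
            congr 1
            refine RB.sum_filter_congr p _ _ (fun ω => ?_)
            simp
    have main := RB.step_core p hp hp1 δ δE U (X i) (S i) Vi (Y i) (Z i)
      (hY i) (hZ i) (X i ω0)
      (fun t : 𝒰 × ((Fin n → Option (Option A)) ×
        (Fin n → Option (Option A)) × (Fin n → Option (Bool × Bool)) × 𝒲) =>
          g (t.2.2.2.2, t.1, t.2.2.2.1)) hdet hind
    rw [h2]
    have h1 : E (i : ℕ) = condEnt p U Vi := by simp only [hE, hVi]
    rw [h1]
    exact main
  have h0 : E 0 ≤ ent p U := by
    simp only [hE]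
    exact RB.condEnt_le_ent hp hp1 U _
  have hEn : 0 ≤ E n := by
    simp only [hE]
    exact RB.condEnt_nonneg hp U _
  have tele : ∑ k ∈ Finset.range n, (E k - E (k + 1)) = E 0 - E n :=
    Finset.sum_range_sub' E n
  have tele2 : ∑ i : Fin n, (E (i : ℕ) - E ((i : ℕ) + 1))
      = ∑ k ∈ Finset.range n, (E k - E (k + 1)) :=
    Fin.sum_univ_eq_sum_range (fun k => E k - E (k + 1)) n
  rw [ge_iff_le]
  calc (1 - δ * δE) * ∑ i : Fin n, condEnt p (X i) (fun ω =>
        (RB.hist Y (i : ℕ) ω, RB.hist Z (i : ℕ) ω, RB.hist S (i : ℕ) ω, W ω))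
      = ∑ i : Fin n, (1 - δ * δE) * condEnt p (X i) (fun ω =>
        (RB.hist Y (i : ℕ) ω, RB.hist Z (i : ℕ) ω, RB.hist S (i : ℕ) ω, W ω)) :=
        Finset.mul_sum _ _ _
    _ = ∑ i : Fin n, (E (i : ℕ) - E ((i : ℕ) + 1)) :=
        Finset.sum_congr rfl (fun i _ => (hstep i).symm)
    _ = E 0 - E n := by rw [tele2, tele]
    _ ≤ ent p U := by linarith
end

section
/- In the single-hop setting with erasure probabilities δ, δ_E ∈ (0,1), any secret key scheme satisfying uniformity H(K) > log|K| - ε, reliability Pr{K ≠ K̂} < ε, and secrecy I(K; Z^n S^n) < ε, has key rate satisfying n·R_SK ≤ H(Y^n S^n | Z^n S^n) + o(n). -/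
open Finset

/-- Probability of an event described by a Boolean predicate, for a pmf `p` on a
finite sample space. -/
noncomputable def prOf {Ω : Type} [Fintype Ω] (p : Ω → ℝ) (A : Ω → Prop)
    [DecidablePred A] : ℝ :=
  ∑ ω ∈ Finset.univ.filter A, p ω

namespace SKConverse

/-- Superadditivity of `negMulLog` on nonnegative families. -/
lemma negMulLog_sum_le {ι : Type*} (t : Finset ι) (x : ι → ℝ) (hx : ∀ i ∈ t, 0 ≤ x i) :
    Real.negMulLog (∑ i ∈ t, x i) ≤ ∑ i ∈ t, Real.negMulLog (x i) := by
  set s := ∑ i ∈ t, x i with hs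
  have hterm : ∀ i ∈ t, x i * (- Real.log s) ≤ Real.negMulLog (x i) := by
    intro i hi
    rcases eq_or_lt_of_le (hx i hi) with h | h
    · simp [Real.negMulLog, ← h]
    · have hxs : x i ≤ s := Finset.single_le_sum hx hi
      have hlog : Real.log (x i) ≤ Real.log s := Real.log_le_log h hxs
      simp only [Real.negMulLog, neg_mul]
      nlinarith
  calc Real.negMulLog s = ∑ i ∈ t, x i * (- Real.log s) := by
        rw [← Finset.sum_mul, ← hs, Real.negMulLog]; ring
    _ ≤ ∑ i ∈ t, Real.negMulLog (x i) := Finset.sum_le_sum hterm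

/-- Jensen: entropy of a nonnegative family is at most
`negMulLog (total) + total * log card`. -/
lemma sum_negMulLog_le {ι : Type} [Fintype ι] [Nonempty ι] (x : ι → ℝ)
    (hx : ∀ i, 0 ≤ x i) :
    ∑ i, Real.negMulLog (x i) ≤
      Real.negMulLog (∑ i, x i) + (∑ i, x i) * Real.log (Fintype.card ι) := by
  set s := ∑ i, x i with hs
  have hN : (0:ℝ) < (Fintype.card ι : ℝ) := by
    exact_mod_cast Fintype.card_pos
  rcases eq_or_lt_of_le (Finset.sum_nonneg (fun i _ => hx i)) with h0 | hspos
  · have hz : ∀ i, x i = 0 := by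
      intro i
      have := (Finset.sum_eq_zero_iff_of_nonneg (fun i _ => hx i)).1 h0.symm
      exact this i (mem_univ i)
    have : s = 0 := h0.symm
    simp [hz, this]
  · have jensen := Real.concaveOn_negMulLog.le_map_sum (t := (Finset.univ : Finset ι))
      (w := fun _ : ι => (Fintype.card ι : ℝ)⁻¹) (p := x)
      (fun i _ => by positivity)
      (by
        rw [Finset.sum_const, Finset.card_univ, nsmul_eq_mul]
        field_simp)
      (fun i _ => Set.mem_Ici.2 (hx i))
    simp only [smul_eq_mul] at jensen
    have hsum1 : ∑ i, (Fintype.card ι : ℝ)⁻¹ * x i = s / (Fintype.card ι : ℝ) := by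
      rw [← Finset.mul_sum, ← hs]; ring
    have hsum2 : ∑ i, (Fintype.card ι : ℝ)⁻¹ * Real.negMulLog (x i)
        = (∑ i, Real.negMulLog (x i)) / (Fintype.card ι : ℝ) := by
      rw [← Finset.mul_sum]; ring
    rw [hsum1, hsum2] at jensen
    have hdiv : Real.negMulLog (s / (Fintype.card ι : ℝ))
        = (Real.negMulLog s + s * Real.log (Fintype.card ι)) / (Fintype.card ι : ℝ) := by
      rw [Real.negMulLog, Real.negMulLog, Real.log_div (ne_of_gt hspos) (ne_of_gt hN)]
      field_simp
      ring
    rw [hdiv] at jensen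
    have := (div_le_div_iff_of_pos_right hN).1 jensen
    linarith

end SKConverse

namespace SKConverse

variable {Ω α β : Type} [Fintype Ω]

/-- Entropy of a function of a random variable is at most the entropy of the variable. -/
lemma ent_comp_le [Fintype α] [Fintype β] [DecidableEq α] [DecidableEq β]
    (p : Ω → ℝ) (hp : ∀ ω, 0 ≤ p ω) (f : Ω → α) (φ : α → β) :
    ent p (fun ω => φ (f ω)) ≤ ent p f := by
  unfold ent
  have key : ∀ b : β, (∑ ω ∈ Finset.univ.filter (fun ω => φ (f ω) = b), p ω)
      = ∑ a ∈ Finset.univ.filter (fun a => φ a = b),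
          ∑ ω ∈ Finset.univ.filter (fun ω => f ω = a), p ω := by
    intro b
    rw [Finset.sum_fiberwise_eq_sum_filter (Finset.univ : Finset Ω)
      (Finset.univ.filter fun a => φ a = b) f p]
    apply Finset.sum_congr _ (fun _ _ => rfl)
    ext ω
    simp
  calc ∑ b : β, Real.negMulLog (∑ ω ∈ Finset.univ.filter (fun ω => φ (f ω) = b), p ω)
      ≤ ∑ b : β, ∑ a ∈ Finset.univ.filter (fun a => φ a = b),
          Real.negMulLog (∑ ω ∈ Finset.univ.filter (fun ω => f ω = a), p ω) := by
        refine Finset.sum_le_sum (fun b _ => ?_)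
        rw [key b]
        exact negMulLog_sum_le _ _
          (fun a _ => Finset.sum_nonneg (fun ω _ => hp ω))
    _ = ∑ a : α, Real.negMulLog (∑ ω ∈ Finset.univ.filter (fun ω => f ω = a), p ω) :=
        Finset.sum_fiberwise _ _ _

/-- Fano-type inequality: `H(f | w) ≤ log 2 + Pr[f ≠ φ(w)] * log |κ|`. -/
lemma fano {κ : Type} [Fintype κ] [Fintype β] [DecidableEq κ] [DecidableEq β]
    [Nonempty κ]
    (p : Ω → ℝ) (hp : ∀ ω, 0 ≤ p ω) (hp1 : ∑ ω, p ω = 1)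
    (f : Ω → κ) (w : Ω → β) (φ : β → κ) :
    condEnt p f w ≤ Real.log 2 +
      prOf p (fun ω => f ω ≠ φ (w ω)) * Real.log (Fintype.card κ) := by
  classical
  set Q : κ → β → ℝ := fun a b =>
    ∑ ω ∈ Finset.univ.filter (fun ω => f ω = a ∧ w ω = b), p ω with hQdef
  have hQnn : ∀ a b, 0 ≤ Q a b := fun a b => Finset.sum_nonneg (fun ω _ => hp ω)
  -- joint entropy in terms of Q
  have hpair : ent p (fun ω => (f ω, w ω)) = ∑ b : β, ∑ a : κ, Real.negMulLog (Q a b) := by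
    unfold ent
    rw [Fintype.sum_prod_type, Finset.sum_comm]
    refine Finset.sum_congr rfl (fun b _ => Finset.sum_congr rfl (fun a _ => ?_))
    congr 1
    apply Finset.sum_congr _ (fun _ _ => rfl)
    ext ω
    simp [Prod.ext_iff]
  -- marginal of w
  have hm : ∀ b, (∑ ω ∈ Finset.univ.filter (fun ω => w ω = b), p ω) = ∑ a : κ, Q a b := by
    intro b
    rw [← Finset.sum_fiberwise (Finset.univ.filter (fun ω => w ω = b)) f p]
    refine Finset.sum_congr rfl (fun a _ => ?_)
    apply Finset.sum_congr _ (fun _ _ => rfl)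
    rw [Finset.filter_filter]
    ext ω
    simp
    tauto
  -- total mass is 1
  have htot : ∑ b : β, ∑ a : κ, Q a b = 1 := by
    have := Finset.sum_fiberwise (Finset.univ : Finset Ω) w p
    calc ∑ b : β, ∑ a : κ, Q a b
        = ∑ b : β, ∑ ω ∈ Finset.univ.filter (fun ω => w ω = b), p ω := by
          refine Finset.sum_congr rfl (fun b _ => (hm b).symm)
      _ = ∑ ω, p ω := this
      _ = 1 := hp1
  -- error mass per b
  have he : ∀ b, (∑ a ∈ Finset.univ.erase (φ b), Q a b)
      = ∑ ω ∈ Finset.univ.filter (fun ω => w ω = b ∧ f ω ≠ φ b), p ω := by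
    intro b
    have := Finset.sum_fiberwise_eq_sum_filter
      (Finset.univ.filter (fun ω => w ω = b)) (Finset.univ.erase (φ b)) f p
    calc ∑ a ∈ Finset.univ.erase (φ b), Q a b
        = ∑ a ∈ Finset.univ.erase (φ b),
            ∑ ω ∈ (Finset.univ.filter (fun ω => w ω = b)).filter (fun ω => f ω = a), p ω := by
          refine Finset.sum_congr rfl (fun a _ => ?_)
          apply Finset.sum_congr _ (fun _ _ => rfl)
          rw [Finset.filter_filter]
          ext ω; simp; tauto
      _ = ∑ ω ∈ (Finset.univ.filter (fun ω => w ω = b)).filter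
            (fun ω => f ω ∈ Finset.univ.erase (φ b)), p ω := this
      _ = ∑ ω ∈ Finset.univ.filter (fun ω => w ω = b ∧ f ω ≠ φ b), p ω := by
          apply Finset.sum_congr _ (fun _ _ => rfl)
          rw [Finset.filter_filter]
          ext ω; simp
  -- total error mass is the error probability
  have herr : ∑ b : β, ∑ a ∈ Finset.univ.erase (φ b), Q a b
      = prOf p (fun ω => f ω ≠ φ (w ω)) := by
    unfold prOf
    rw [← Finset.sum_fiberwise (Finset.univ.filter (fun ω => f ω ≠ φ (w ω))) w p]
    refine Finset.sum_congr rfl (fun b _ => ?_)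
    rw [he b]
    apply Finset.sum_congr _ (fun _ _ => rfl)
    rw [Finset.filter_filter]
    ext ω
    simp only [Finset.mem_filter, Finset.mem_univ, true_and]
    constructor
    · rintro ⟨h1, h2⟩
      subst h1
      exact ⟨h2, rfl⟩
    · rintro ⟨h1, h2⟩
      subst h2
      exact ⟨rfl, h1⟩
  -- per-b bound
  have hb : ∀ b : β, (∑ a : κ, Real.negMulLog (Q a b)) ≤
      Real.negMulLog (∑ a : κ, Q a b) + (∑ a : κ, Q a b) * Real.log 2
        + (∑ a ∈ Finset.univ.erase (φ b), Q a b) * Real.log (Fintype.card κ) := by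
    intro b
    set u := Q (φ b) b with hu
    set e := ∑ a ∈ Finset.univ.erase (φ b), Q a b with hedef
    have henn : 0 ≤ e := Finset.sum_nonneg (fun a _ => hQnn a b)
    have h1 : ∑ a : κ, Real.negMulLog (Q a b)
        = Real.negMulLog u + ∑ a ∈ Finset.univ.erase (φ b), Real.negMulLog (Q a b) :=
      (Finset.add_sum_erase Finset.univ _ (Finset.mem_univ (φ b))).symm
    have h4 : ∑ a : κ, Q a b = u + e :=
      (Finset.add_sum_erase Finset.univ _ (Finset.mem_univ (φ b))).symm
    have h2 : ∑ a ∈ Finset.univ.erase (φ b), Real.negMulLog (Q a b)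
        ≤ Real.negMulLog e + e * Real.log (Fintype.card κ) := by
      have hx : ∀ a : κ, 0 ≤ (if a = φ b then 0 else Q a b) := by
        intro a; split <;> simp [hQnn]
      have hJ := sum_negMulLog_le (fun a => if a = φ b then 0 else Q a b) hx
      have hs1 : ∑ a : κ, (if a = φ b then (0:ℝ) else Q a b) = e := by
        rw [← Finset.add_sum_erase Finset.univ _ (Finset.mem_univ (φ b))]
        simp only [eq_self_iff_true, if_true, zero_add, hedef]
        refine Finset.sum_congr rfl (fun a ha => ?_)
        rw [if_neg (Finset.mem_erase.1 ha).1]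
      have hs2 : ∑ a : κ, Real.negMulLog (if a = φ b then (0:ℝ) else Q a b)
          = ∑ a ∈ Finset.univ.erase (φ b), Real.negMulLog (Q a b) := by
        rw [← Finset.add_sum_erase Finset.univ _ (Finset.mem_univ (φ b))]
        simp only [eq_self_iff_true, if_true, Real.negMulLog_zero, zero_add]
        refine Finset.sum_congr rfl (fun a ha => ?_)
        rw [if_neg (Finset.mem_erase.1 ha).1]
      rw [hs1, hs2] at hJ
      exact hJ
    have h3 : Real.negMulLog u + Real.negMulLog e
        ≤ Real.negMulLog (u + e) + (u + e) * Real.log 2 := by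
      have hx : ∀ i : Bool, 0 ≤ (if i then u else e) := by
        intro i; cases i <;> simp [hQnn, henn, hu]
      have hJ := sum_negMulLog_le (fun i : Bool => if i then u else e) hx
      rw [Fintype.sum_bool, Fintype.sum_bool] at hJ
      simp only [if_pos, if_neg, Fintype.card_bool] at hJ
      simpa using hJ
    rw [h1, h4]
    linarith
  -- assemble
  unfold condEnt
  rw [hpair]
  have hentw : ent p w = ∑ b : β, Real.negMulLog (∑ a : κ, Q a b) := by
    unfold ent
    exact Finset.sum_congr rfl (fun b _ => by rw [hm b])
  rw [hentw]
  have hsum := Finset.sum_le_sum (fun b (_ : b ∈ (Finset.univ : Finset β)) => hb b)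
  rw [Finset.sum_add_distrib, Finset.sum_add_distrib, ← Finset.sum_mul, ← Finset.sum_mul,
    htot, herr] at hsum
  linarith

end SKConverse


/-- Converse bound for secret key generation over the single-hop broadcast
erasure channel with feedback: any scheme with (almost) uniform key, reliable
key agreement and secrecy from Eve satisfies
`n·R_SK ≤ H(Yⁿ Sⁿ | Zⁿ Sⁿ) + o(n)`, where the `o(n)` slack collects the terms
coming from uniformity, secrecy and Fano's inequality. -/
theorem secret_key_rate_converse
    {Ω κ 𝒴 𝒵 𝒮 : Type} [Fintype Ω] [Fintype κ] [Fintype 𝒴] [Fintype 𝒵]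
    [Fintype 𝒮] [DecidableEq κ] [DecidableEq 𝒴] [DecidableEq 𝒵] [DecidableEq 𝒮]
    [Nonempty κ]
    (p : Ω → ℝ) (hp : ∀ ω, 0 ≤ p ω) (hp1 : ∑ ω, p ω = 1)
    (n : ℕ) (R : ℝ) (ε : ℝ) (hε : 0 < ε)
    (K Khat : Ω → κ) (Y : Ω → 𝒴) (Z : Ω → 𝒵) (S : Ω → 𝒮)
    -- the receiver computes its key from `(Yⁿ, Sⁿ)`
    (hKhat : ∃ g : 𝒴 × 𝒮 → κ, ∀ ω, Khat ω = g (Y ω, S ω))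
    -- uniformity: `H(K) > log |K| - ε`
    (hUnif : Real.log (Fintype.card κ) - ε < ent p K)
    -- reliability: `Pr{K ≠ Khat} < ε`
    (hRel : prOf p (fun ω => K ω ≠ Khat ω) < ε)
    -- secrecy: `I(K; Zⁿ Sⁿ) < ε`
    (hSec : ent p K - condEnt p K (fun ω => (Z ω, S ω)) < ε)
    -- the key rate: `|K| ≥ 2^{nR}`, i.e. `n·R_SK ≤ log |K|`
    (hRate : (n : ℝ) * R ≤ Real.log (Fintype.card κ)) :
    (n : ℝ) * R ≤ condEnt p (fun ω => (Y ω, S ω)) (fun ω => (Z ω, S ω)) +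
      2 * ε + Real.log 2 + ε * Real.log (Fintype.card κ) := by
  classical
  obtain ⟨g, hg⟩ := hKhat
  have hlogκ : 0 ≤ Real.log (Fintype.card κ) := by
    apply Real.log_nonneg
    exact_mod_cast Fintype.card_pos
  -- step A : H(K, ZS) ≤ H(K, Khat, ZS)
  have hA : ent p (fun ω => (K ω, (Z ω, S ω))) ≤
      ent p (fun ω => (K ω, (Khat ω, (Z ω, S ω)))) :=
    SKConverse.ent_comp_le p hp (fun ω => (K ω, (Khat ω, (Z ω, S ω))))
      (fun c => (c.1, c.2.2))
  -- step B (Fano) : H(K, Khat, ZS) - H(Khat, ZS) ≤ log 2 + Pr[K ≠ Khat] log|κ|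
  have hB : ent p (fun ω => (K ω, (Khat ω, (Z ω, S ω)))) -
      ent p (fun ω => (Khat ω, (Z ω, S ω))) ≤
      Real.log 2 + prOf p (fun ω => K ω ≠ Khat ω) * Real.log (Fintype.card κ) :=
    SKConverse.fano p hp hp1 K (fun ω => (Khat ω, (Z ω, S ω))) Prod.fst
  -- step C : H(Khat, ZS) ≤ H(YS, ZS)
  have hC : ent p (fun ω => (Khat ω, (Z ω, S ω))) ≤
      ent p (fun ω => ((Y ω, S ω), (Z ω, S ω))) := by
    have h := SKConverse.ent_comp_le p hp (fun ω => ((Y ω, S ω), (Z ω, S ω)))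
      (fun c => (g c.1, c.2))
    have hfun : (fun ω => (g (Y ω, S ω), (Z ω, S ω))) =
        (fun ω => (Khat ω, (Z ω, S ω))) := by
      funext ω
      rw [hg ω]
    calc ent p (fun ω => (Khat ω, (Z ω, S ω)))
        = ent p (fun ω => (g (Y ω, S ω), (Z ω, S ω))) := by rw [hfun]
      _ ≤ ent p (fun ω => ((Y ω, S ω), (Z ω, S ω))) := h
  have hPle : prOf p (fun ω => K ω ≠ Khat ω) * Real.log (Fintype.card κ) ≤
      ε * Real.log (Fintype.card κ) :=
    mul_le_mul_of_nonneg_right (le_of_lt hRel) hlogκ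
  have e1 : condEnt p K (fun ω => (Z ω, S ω)) =
      ent p (fun ω => (K ω, (Z ω, S ω))) - ent p (fun ω => (Z ω, S ω)) := rfl
  have e2 : condEnt p (fun ω => (Y ω, S ω)) (fun ω => (Z ω, S ω)) =
      ent p (fun ω => ((Y ω, S ω), (Z ω, S ω))) - ent p (fun ω => (Z ω, S ω)) := rfl
  rw [e2]
  rw [e1] at hSec
  linarith
end
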